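/- Detailed balance for Gibbs sampling over d-policies: assume σ has full support and let β > 0. Then for all d-policies π and π', X^β(π)·K^β(π,π') = X^β(π')·K^β(π',π). -/

import Mathlib

open Finset

/-- A learning system: a commutative additive monoid `M` of stochastic policies,
a finite nonempty set `S` of contexts, a finite nonempty behavior set `A s` for each
context `s`, and an inference function `inf` assigning to each policy and context a
probability mass function on the behaviors of that context, satisfying the chain rule. -/
structure LearningSystem (M : Type) [AddCommMonoid M] (S : Type) [Fintype S] [DecidableEq S] :
    Type where
  A : S → Finset M
  A_nonempty : ∀ s, (A s).Nonempty
  inf : M → S → M → ℝ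
  inf_nonneg : ∀ φ s a, 0 ≤ inf φ s a
  inf_eq_zero_of_not_mem : ∀ φ s a, a ∉ A s → inf φ s a = 0
  inf_sum_one : ∀ φ s, ∑ a ∈ A s, inf φ s a = 1
  chain_rule : ∀ (φ : M) (s₁ s₂ : S) (a₁ a₂ : M), a₁ ∈ A s₁ → a₂ ∈ A s₂ →
    inf φ s₁ a₁ * inf (φ + a₁) s₂ a₂ = inf φ s₂ a₂ * inf (φ + a₂) s₁ a₁

namespace LearningSystem

variable {M S : Type} [AddCommMonoid M] [Fintype S] [DecidableEq S]

/-- A deterministic policy (d-policy): an assignment of a behavior `π s ∈ A s` to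
every context `s ∈ S`. -/
abbrev DPolicy (L : LearningSystem M S) : Type := ∀ s : S, {a : M // a ∈ L.A s}

/-- `σ` has full support: every behavior of every context has positive probability
under every prior policy. -/
def FullSupport (L : LearningSystem M S) : Prop :=
  ∀ (φ : M) (s : S) (a : M), a ∈ L.A s → 0 < L.inf φ s a

/-- The coherence of a d-policy `π` relative to the prior policy `φ`, computed along
the enumeration `f` of contexts:
`∑ n, log₂ σ(φ + ∑_{m<n} π(f m), f n)(π (f n))`. -/
noncomputable def cohAlong (L : LearningSystem M S) (φ : M) (π : L.DPolicy)
    {k : ℕ} (f : Fin k → S) : ℝ :=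
  ∑ n : Fin k, Real.logb 2
    (L.inf (φ + ∑ m ∈ Finset.univ.filter (fun m => m < n), ((π (f m) : M)))
      (f n) ((π (f n) : M)))

/-- The product `∏ n, σ(φ + ∑_{m<n} π(f m), f n)(π (f n))` along the enumeration `f`. -/
noncomputable def prodAlong (L : LearningSystem M S) (φ : M) (π : L.DPolicy)
    {k : ℕ} (f : Fin k → S) : ℝ :=
  ∏ n : Fin k,
    L.inf (φ + ∑ m ∈ Finset.univ.filter (fun m => m < n), ((π (f m) : M)))
      (f n) ((π (f n) : M))

/-- The coherence `χ(π)` (relative to the zero prior policy), with respect to the fixed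
enumeration `e` of the contexts. -/
noncomputable def coherence (L : LearningSystem M S) {k : ℕ} (e : Fin k ≃ S)
    (π : L.DPolicy) : ℝ :=
  L.cohAlong 0 π ⇑e

/-- The softmax over coherence at inverse temperature `β`:
`X^β(π) = 2^(β χ(π)) / ∑_{π'} 2^(β χ(π'))`. -/
noncomputable def softmaxCoh (L : LearningSystem M S) {k : ℕ} (e : Fin k ≃ S) (β : ℝ)
    (π : L.DPolicy) : ℝ :=
  (2 : ℝ) ^ (β * L.coherence e π) / ∑ π' : L.DPolicy, (2 : ℝ) ^ (β * L.coherence e π')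

/-- The tempered inference function `σ^β(φ,s)(a) = σ(φ,s)(a)^β / ∑_{a'∈A_s} σ(φ,s)(a')^β`. -/
noncomputable def sigmaBeta (L : LearningSystem M S) (β : ℝ) (φ : M) (s : S) (a : M) : ℝ :=
  L.inf φ s a ^ β / ∑ a' ∈ L.A s, L.inf φ s a' ^ β

/-- The Gibbs transition kernel on d-policies:
`K^β(π,π') = (1/k) ∑_n 1[π'(s_m) = π(s_m) ∀ m ≠ n] · σ^β(∑_{m≠n} π(s_m), s_n)(π'(s_n))`. -/
noncomputable def gibbsKernel [DecidableEq M] (L : LearningSystem M S) {k : ℕ}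
    (e : Fin k ≃ S) (β : ℝ) (π π' : L.DPolicy) : ℝ :=
  ((k : ℝ))⁻¹ * ∑ n : Fin k,
    if ∀ m : Fin k, m ≠ n → π' (e m) = π (e m) then
      L.sigmaBeta β (∑ m ∈ Finset.univ.erase n, ((π (e m) : M))) (e n) ((π' (e n) : M))
    else 0

end LearningSystem


namespace LearningSystem

variable {M S : Type} [AddCommMonoid M] [Fintype S] [DecidableEq S]

noncomputable def prodList (L : LearningSystem M S) (π : L.DPolicy) : M → List S → ℝ
  | _, [] => 1
  | φ, s :: l => L.inf φ s (π s) * L.prodList π (φ + (π s : M)) l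

lemma prodList_perm (L : LearningSystem M S) (π : L.DPolicy) {l₁ l₂ : List S}
    (h : l₁.Perm l₂) : ∀ φ, L.prodList π φ l₁ = L.prodList π φ l₂ := by
  induction h with
  | nil => intro φ; rfl
  | cons s _ ih => intro φ; simp only [prodList, ih]
  | swap x y l =>
    intro φ
    simp only [prodList, ← mul_assoc]
    rw [L.chain_rule φ y x (π y) (π x) (π y).2 (π x).2, add_right_comm]
  | trans _ _ ih₁ ih₂ => intro φ; rw [ih₁, ih₂]

lemma prodList_append (L : LearningSystem M S) (π : L.DPolicy) (l₁ l₂ : List S) :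
    ∀ φ, L.prodList π φ (l₁ ++ l₂) =
      L.prodList π φ l₁ * L.prodList π (φ + (l₁.map (fun s => (π s : M))).sum) l₂ := by
  induction l₁ with
  | nil => intro φ; simp [prodList]
  | cons s l ih =>
    intro φ
    simp only [List.cons_append, prodList, List.map_cons, List.sum_cons, mul_assoc,
      ← add_assoc]
    rw [ih]

lemma prodList_congr (L : LearningSystem M S) (π π' : L.DPolicy) (l : List S)
    (h : ∀ s ∈ l, (π s : M) = (π' s : M)) : ∀ φ, L.prodList π φ l = L.prodList π' φ l := by
  induction l with
  | nil => intro φ; rfl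
  | cons s l ih =>
    intro φ
    have hs : (π s : M) = (π' s : M) := h s List.mem_cons_self
    simp only [prodList, hs, ih (fun t ht => h t (List.mem_cons_of_mem s ht))]

lemma prodAlong_eq_prodList (L : LearningSystem M S) (π : L.DPolicy) :
    ∀ {k : ℕ} (f : Fin k → S) (φ : M), L.prodAlong φ π f = L.prodList π φ (List.ofFn f) := by
  intro k
  induction k with
  | zero => intro f φ; simp [prodAlong, prodList, List.ofFn_zero]
  | succ k ih =>
    intro f φ
    rw [List.ofFn_succ]
    show _ = L.inf φ (f 0) (π (f 0)) * L.prodList π (φ + (π (f 0) : M)) (List.ofFn (f ∘ Fin.succ))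
    rw [← ih]
    rw [prodAlong, Fin.prod_univ_succ]
    congr 1
    · congr 1
      have : (Finset.univ.filter (fun m => m < (0 : Fin (k+1)))) = ∅ := by
        ext m; simp [Fin.not_lt_zero]
      rw [this, Finset.sum_empty, add_zero]
    · rw [prodAlong]
      refine Finset.prod_congr rfl fun n _ => ?_
      congr 1
      rw [Finset.sum_filter, Finset.sum_filter, Fin.sum_univ_succ]
      simp only [Fin.succ_pos, if_true, Fin.succ_lt_succ_iff, Function.comp_apply]
      rw [add_assoc]

lemma prodAlong_pos (L : LearningSystem M S) (hfs : L.FullSupport)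
    (φ : M) (π : L.DPolicy) {k : ℕ} (f : Fin k → S) : 0 < L.prodAlong φ π f :=
  Finset.prod_pos fun n _ => hfs _ _ _ (π (f n)).2

lemma coherence_eq_logb (L : LearningSystem M S) (hfs : L.FullSupport) {k : ℕ}
    (e : Fin k ≃ S) (π : L.DPolicy) :
    L.coherence e π = Real.logb 2 (L.prodAlong 0 π ⇑e) := by
  rw [coherence, cohAlong, prodAlong,
    Real.logb_prod _ _ (fun n _ => ne_of_gt (hfs _ _ _ (π (e n)).2))]

lemma two_rpow_coherence (L : LearningSystem M S) (hfs : L.FullSupport) {k : ℕ}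
    (e : Fin k ≃ S) (β : ℝ) (π : L.DPolicy) :
    (2 : ℝ) ^ (β * L.coherence e π) = (L.prodAlong 0 π ⇑e) ^ β := by
  rw [L.coherence_eq_logb hfs e π, mul_comm, Real.rpow_mul (by norm_num : (0:ℝ) ≤ 2),
    Real.rpow_logb two_pos (by norm_num) (L.prodAlong_pos hfs 0 π ⇑e)]

lemma ofFn_perm {k : ℕ} (e : Fin k ≃ S) (n0 : Fin k) :
    (List.ofFn ⇑e).Perm (((Finset.univ.erase n0).toList.map ⇑e) ++ [e n0]) := by
  refine List.Perm.trans ?_ (List.perm_append_singleton _ _).symm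
  rw [← Multiset.coe_eq_coe]
  show (↑(List.ofFn ⇑e) : Multiset S) = ↑(e n0 :: (Finset.univ.erase n0).toList.map ⇑e)
  rw [← Fin.univ_val_map, ← Multiset.cons_coe, ← Multiset.map_coe, Finset.coe_toList,
    Finset.erase_val, ← Multiset.map_cons,
    Multiset.cons_erase (Finset.mem_def.mp (Finset.mem_univ n0))]

end LearningSystem


/-- Detailed balance for Gibbs sampling over d-policies: if `σ` has full support and
`β > 0`, then for all d-policies `π`, `π'`,
`X^β(π) · K^β(π,π') = X^β(π') · K^β(π',π)`. -/
theorem gibbs_detailed_balance {M S : Type} [AddCommMonoid M] [DecidableEq M]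
    [Fintype S] [DecidableEq S] [Nonempty S] (L : LearningSystem M S)
    (hfs : L.FullSupport) {k : ℕ} (e : Fin k ≃ S) (β : ℝ) (hβ : 0 < β)
    (π π' : L.DPolicy) :
    L.softmaxCoh e β π * L.gibbsKernel e β π π' =
      L.softmaxCoh e β π' * L.gibbsKernel e β π' π := by
  classical
  by_cases hall : ∀ n : Fin k, π' (e n) = π (e n)
  · have hpp : π' = π := funext fun s => by
      have h := hall (e.symm s); rwa [e.apply_symm_apply] at h
    rw [hpp]
  · push_neg at hall
    obtain ⟨n0, hn0⟩ := hall
    by_cases hone : ∀ m : Fin k, m ≠ n0 → π' (e m) = π (e m)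
    · -- π and π' differ exactly at n0
      set s0 := e n0 with hs0
      set φ : M := ∑ m ∈ Finset.univ.erase n0, ((π (e m) : M)) with hφdef
      have hφ' : ∑ m ∈ Finset.univ.erase n0, ((π' (e m) : M)) = φ :=
        Finset.sum_congr rfl fun m hm => by
          rw [hone m (Finset.ne_of_mem_erase hm)]
      have hK1 : L.gibbsKernel e β π π' =
          (k : ℝ)⁻¹ * L.sigmaBeta β φ s0 ((π' (e n0) : M)) := by
        rw [LearningSystem.gibbsKernel]
        congr 1
        rw [Finset.sum_eq_single n0]
        · rw [if_pos hone]
        · intro n _ hn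
          rw [if_neg]
          intro h
          exact hn0 (h n0 (Ne.symm hn))
        · intro h; exact absurd (Finset.mem_univ n0) h
      have hK2 : L.gibbsKernel e β π' π =
          (k : ℝ)⁻¹ * L.sigmaBeta β φ s0 ((π (e n0) : M)) := by
        rw [LearningSystem.gibbsKernel]
        congr 1
        rw [Finset.sum_eq_single n0]
        · rw [if_pos fun m hm => (hone m hm).symm, hφ']
        · intro n _ hn
          rw [if_neg]
          intro h
          exact hn0 ((h n0 (Ne.symm hn)).symm)
        · intro h; exact absurd (Finset.mem_univ n0) h
      -- decompose the path products
      set rest : List S := (Finset.univ.erase n0).toList.map ⇑e with hrest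
      have hmemrest : ∀ s ∈ rest, (π' s : M) = (π s : M) := by
        intro s hsr
        rw [hrest] at hsr
        obtain ⟨m, hm, rfl⟩ := List.mem_map.mp hsr
        rw [hone m (Finset.ne_of_mem_erase (Finset.mem_toList.mp hm))]
      have hsum : (rest.map (fun s => ((π s : M)))).sum = φ := by
        rw [hrest, List.map_map, hφdef]
        exact (Finset.sum_map_toList _ _)
      have hsum' : (rest.map (fun s => ((π' s : M)))).sum = φ := by
        rw [List.map_congr_left hmemrest, hsum]
      have hdecomp : ∀ (ρ : L.DPolicy), (rest.map (fun s => ((ρ s : M)))).sum = φ →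
          L.prodAlong 0 ρ ⇑e = L.prodList ρ 0 rest * L.inf φ s0 ((ρ s0 : M)) := by
        intro ρ hρ
        rw [L.prodAlong_eq_prodList ρ ⇑e 0, L.prodList_perm ρ (LearningSystem.ofFn_perm e n0) 0,
          L.prodList_append, hρ, zero_add]
        simp [LearningSystem.prodList]
        rfl
      have hQ : L.prodList π' 0 rest = L.prodList π 0 rest :=
        L.prodList_congr π' π rest hmemrest 0
      have hπs0 : ((π s0 : M)) = ((π (e n0) : M)) := by rw [hs0]
      have hπ's0 : ((π' s0 : M)) = ((π' (e n0) : M)) := by rw [hs0]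
      have key : L.prodAlong 0 π ⇑e * L.inf φ s0 ((π' (e n0) : M)) =
          L.prodAlong 0 π' ⇑e * L.inf φ s0 ((π (e n0) : M)) := by
        rw [hdecomp π hsum, hdecomp π' hsum', hQ, hπs0, hπ's0]
        ring
      have hb : (0:ℝ) ≤ L.inf φ s0 ((π (e n0) : M)) := L.inf_nonneg _ _ _
      have hb' : (0:ℝ) ≤ L.inf φ s0 ((π' (e n0) : M)) := L.inf_nonneg _ _ _
      have keyβ : (L.prodAlong 0 π ⇑e) ^ β * (L.inf φ s0 ((π' (e n0) : M))) ^ β =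
          (L.prodAlong 0 π' ⇑e) ^ β * (L.inf φ s0 ((π (e n0) : M))) ^ β := by
        rw [← Real.mul_rpow (le_of_lt (L.prodAlong_pos hfs 0 π ⇑e)) hb',
          ← Real.mul_rpow (le_of_lt (L.prodAlong_pos hfs 0 π' ⇑e)) hb, key]
      rw [hK1, hK2, LearningSystem.softmaxCoh, LearningSystem.softmaxCoh,
        LearningSystem.sigmaBeta, LearningSystem.sigmaBeta,
        L.two_rpow_coherence hfs e β π, L.two_rpow_coherence hfs e β π']
      set Z : ℝ := ∑ ρ : L.DPolicy, (2 : ℝ) ^ (β * L.coherence e ρ) with hZ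
      set D : ℝ := ∑ a' ∈ L.A s0, L.inf φ s0 a' ^ β with hD
      simp only [div_eq_mul_inv]
      linear_combination (Z⁻¹ * (k : ℝ)⁻¹ * D⁻¹) * keyβ
    · -- π and π' differ in at least two contexts: both kernel values vanish
      push_neg at hone
      obtain ⟨m0, hm0ne, hm0⟩ := hone
      have hK1 : L.gibbsKernel e β π π' = 0 := by
        rw [LearningSystem.gibbsKernel, Finset.sum_eq_zero, mul_zero]
        · intro n _
          rw [if_neg]
          intro h
          by_cases hn : n = n0
          · exact hm0 (h m0 (hn ▸ hm0ne))
          · exact hn0 (h n0 fun hcon => hn hcon.symm)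
      have hK2 : L.gibbsKernel e β π' π = 0 := by
        rw [LearningSystem.gibbsKernel, Finset.sum_eq_zero, mul_zero]
        · intro n _
          rw [if_neg]
          intro h
          by_cases hn : n = n0
          · exact hm0 ((h m0 (hn ▸ hm0ne)).symm)
          · exact hn0 ((h n0 fun hcon => hn hcon.symm).symm)
      rw [hK1, hK2, mul_zero, mul_zero]
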